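/- Let (X, μ) be a probability space with tree structure 𝒯, let 1 < q < p, and let φ ≥ 0 be in L^p(X, μ) with ∫_X φ dμ = f and ∫_X φ^q dμ = A. Then ∫_X (ℳ_𝒯 φ)^p dμ ≤ f^p − (p/(p−q)) f^{p−q} A + (p/(p−q)) ∫_X (ℳ_𝒯 φ)^{p−q} φ^q dμ. -/

import Mathlib

open MeasureTheory Set Filter

/-- A tree structure on a probability space `(X, μ)` in the sense of Definition 2.1:
`𝒯 = ⋃ₘ 𝒯₍ₘ₎` with `𝒯₍₀₎ = {X}`, each `I ∈ 𝒯` split into at least two pairwise almost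
disjoint children covering `I`, all elements measurable of positive measure, and
`sup_{I ∈ 𝒯₍ₘ₎} μ(I) → 0`. -/
structure TreeStruct {X : Type*} [MeasurableSpace X] (μ : Measure X) where
  level : ℕ → Set (Set X)
  child : Set X → Set (Set X)
  level_zero : level 0 = {Set.univ}
  level_succ : ∀ m, level (m + 1) = ⋃ I ∈ level m, child I
  mem_meas : ∀ m, ∀ I ∈ level m, MeasurableSet I
  mem_pos : ∀ m, ∀ I ∈ level m, 0 < μ I
  child_countable : ∀ I, (child I).Countable
  child_nontrivial : ∀ m, ∀ I ∈ level m, ∃ J ∈ child I, ∃ K ∈ child I, J ≠ K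
  child_subset : ∀ m, ∀ I ∈ level m, ∀ J ∈ child I, J ⊆ I
  child_almost_disjoint :
    ∀ m, ∀ I ∈ level m, ∀ J ∈ child I, ∀ K ∈ child I, J ≠ K → μ (J ∩ K) = 0
  child_cover : ∀ m, ∀ I ∈ level m, I = ⋃₀ child I
  level_small : Tendsto (fun m => ⨆ I ∈ level m, μ I) atTop (nhds 0)

/-- Membership in the tree: `I ∈ 𝒯` iff it belongs to some level. -/
def TreeStruct.Mem {X : Type*} [MeasurableSpace X] {μ : Measure X}
    (T : TreeStruct μ) (I : Set X) : Prop := ∃ m, I ∈ T.level m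

/-- The maximal operator associated to the tree `𝒯`:
`ℳ_𝒯 φ(x) = sup { (1/μ(I)) ∫_I |φ| dμ : x ∈ I ∈ 𝒯 }`. -/
noncomputable def maxOp {X : Type*} [MeasurableSpace X] {μ : Measure X}
    (T : TreeStruct μ) (φ : X → ℝ) (x : X) : ℝ :=
  sSup ((fun I => (∫ y in I, |φ y| ∂μ) / (μ I).toReal) '' {I | T.Mem I ∧ x ∈ I})

namespace MaxAux

variable {X : Type*} [MeasurableSpace X] {μ : Measure X}

/-- The average of `|φ|` over `I`. -/
noncomputable def avg (μ : Measure X) (φ : X → ℝ) (I : Set X) : ℝ :=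
  (∫ y in I, |φ y| ∂μ) / (μ I).toReal

/-- A chain in the tree from the root down to level `m`. -/
def PChain (T : TreeStruct μ) (c : ℕ → Set X) (m : ℕ) : Prop :=
  c 0 = Set.univ ∧ ∀ j < m, c (j + 1) ∈ T.child (c j)

theorem univ_mem_level (T : TreeStruct μ) : Set.univ ∈ T.level 0 := by
  rw [T.level_zero]; exact rfl

theorem chain_mem_level {T : TreeStruct μ} {c : ℕ → Set X} {m : ℕ}
    (hc : PChain T c m) : ∀ j, j ≤ m → c j ∈ T.level j := by
  intro j
  induction j with
  | zero => intro _; rw [hc.1]; exact univ_mem_level T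
  | succ k ih =>
    intro hk
    have hk' : k < m := lt_of_lt_of_le (Nat.lt_succ_self k) hk
    have := hc.2 k hk'
    rw [T.level_succ k]
    exact Set.mem_biUnion (ih hk'.le) this

theorem chain_subset {T : TreeStruct μ} {c : ℕ → Set X} {m : ℕ}
    (hc : PChain T c m) : ∀ i j, i ≤ j → j ≤ m → c j ⊆ c i := by
  intro i j hij hjm
  induction j with
  | zero => cases Nat.le_zero.mp hij; exact subset_rfl
  | succ k ih =>
    rcases Nat.lt_or_ge i (k+1) with h | h
    · have hik : i ≤ k := Nat.lt_succ_iff.mp h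
      have hkm : k < m := Nat.lt_of_succ_le hjm
      have h1 : c (k+1) ⊆ c k :=
        T.child_subset k (c k) (chain_mem_level hc k hkm.le) _ (hc.2 k hkm)
      exact h1.trans (ih hik hkm.le)
    · have : i = k + 1 := le_antisymm hij h
      subst this; exact subset_rfl

theorem exists_chain {T : TreeStruct μ} {m : ℕ} {J : Set X} (hJ : J ∈ T.level m) :
    ∃ c, PChain T c m ∧ c m = J := by
  induction m generalizing J with
  | zero =>
    rw [T.level_zero] at hJ
    refine ⟨fun _ => Set.univ, ⟨rfl, fun j hj => absurd hj (Nat.not_lt_zero j)⟩, ?_⟩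
    simpa using hJ.symm
  | succ m ih =>
    rw [T.level_succ m] at hJ
    rcases Set.mem_iUnion₂.mp hJ with ⟨I, hI, hJI⟩
    rcases ih hI with ⟨c, hc, hcm⟩
    refine ⟨fun j => if j ≤ m then c j else J, ⟨by simp [hc.1], ?_⟩, by simp⟩
    intro j hj
    rcases Nat.lt_or_ge j m with h | h
    · simpa [Nat.succ_le_of_lt h, h.le] using hc.2 j h
    · have : j = m := le_antisymm (Nat.lt_succ_iff.mp hj) h
      subst this
      simp [hcm, hJI]

theorem level_countable (T : TreeStruct μ) : ∀ m, (T.level m).Countable := by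
  intro m
  induction m with
  | zero => rw [T.level_zero]; exact Set.countable_singleton _
  | succ m ih =>
    rw [T.level_succ m]
    exact ih.biUnion fun I _ => T.child_countable I

theorem tree_countable (T : TreeStruct μ) : {I | T.Mem I}.Countable := by
  have : {I | T.Mem I} = ⋃ m, T.level m := by
    ext I; simp [TreeStruct.Mem]
  rw [this]
  exact Set.countable_iUnion (level_countable T)

/-- The family of maximal tree elements with average exceeding `t`. -/
def Sel (T : TreeStruct μ) (φ : X → ℝ) (t : ℝ) : Set (Set X) :=
  {J | ∃ m c, PChain T c m ∧ c m = J ∧ t < avg μ φ J ∧ ∀ j < m, avg μ φ (c j) ≤ t}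

theorem sel_mem_tree {T : TreeStruct μ} {φ : X → ℝ} {t : ℝ} {J : Set X}
    (hJ : J ∈ Sel T φ t) : T.Mem J := by
  rcases hJ with ⟨m, c, hc, hcm, _, _⟩
  exact ⟨m, hcm ▸ chain_mem_level hc m le_rfl⟩

theorem sel_countable (T : TreeStruct μ) (φ : X → ℝ) (t : ℝ) :
    (Sel T φ t).Countable :=
  (tree_countable T).mono fun _ hJ => sel_mem_tree hJ

theorem sel_avg_gt {T : TreeStruct μ} {φ : X → ℝ} {t : ℝ} {J : Set X}
    (hJ : J ∈ Sel T φ t) : t < avg μ φ J := by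
  rcases hJ with ⟨m, c, _, _, h, _⟩; exact h

open Classical in
theorem sel_cover {T : TreeStruct μ} {φ : X → ℝ} {t : ℝ} {I : Set X}
    (hI : T.Mem I) (ht : t < avg μ φ I) : ∃ J ∈ Sel T φ t, I ⊆ J := by
  rcases hI with ⟨m, hIm⟩
  rcases exists_chain hIm with ⟨c, hc, hcm⟩
  have hex : ∃ j, t < avg μ φ (c j) := ⟨m, by rw [hcm]; exact ht⟩
  set k := Nat.find hex with hk
  have hkm : k ≤ m := Nat.find_le (by rw [hcm]; exact ht)
  refine ⟨c k, ⟨k, c, ⟨hc.1, fun j hj => hc.2 j (lt_of_lt_of_le hj hkm)⟩, rfl,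
    Nat.find_spec hex, fun j hj => not_lt.mp (Nat.find_min hex hj)⟩, ?_⟩
  rw [← hcm]
  exact chain_subset hc k m hkm le_rfl

theorem chains_ae_disjoint {T : TreeStruct μ} {c c' : ℕ → Set X} {m m' : ℕ}
    (hc : PChain T c m) (hc' : PChain T c' m') :
    ∀ j, j ≤ m → j ≤ m' → c j = c' j ∨ μ (c j ∩ c' j) = 0 := by
  intro j
  induction j with
  | zero => intro _ _; left; rw [hc.1, hc'.1]
  | succ k ih =>
    intro h1 h2
    have hk1 : k < m := Nat.lt_of_succ_le h1
    have hk2 : k < m' := Nat.lt_of_succ_le h2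
    rcases ih hk1.le hk2.le with h | h
    · by_cases he : c (k+1) = c' (k+1)
      · exact Or.inl he
      · right
        refine T.child_almost_disjoint k (c k) (chain_mem_level hc k hk1.le) _
          (hc.2 k hk1) _ ?_ he
        rw [h]; exact hc'.2 k hk2
    · right
      have s1 : c (k+1) ⊆ c k :=
        T.child_subset k (c k) (chain_mem_level hc k hk1.le) _ (hc.2 k hk1)
      have s2 : c' (k+1) ⊆ c' k :=
        T.child_subset k (c' k) (chain_mem_level hc' k hk2.le) _ (hc'.2 k hk2)
      exact measure_mono_null (Set.inter_subset_inter s1 s2) h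

theorem sel_aedisjoint_aux {T : TreeStruct μ} {φ : X → ℝ} {t : ℝ} {J J' : Set X}
    (hJ : J ∈ Sel T φ t) (hJ' : J' ∈ Sel T φ t)
    {m m' : ℕ} {c c' : ℕ → Set X}
    (hc : PChain T c m) (hcm : c m = J) (havg : ∀ j < m, avg μ φ (c j) ≤ t)
    (hc' : PChain T c' m') (hcm' : c' m' = J') (havg' : ∀ j < m', avg μ φ (c' j) ≤ t)
    (hle : m ≤ m') (hne : J ≠ J') : μ (J ∩ J') = 0 := by
  rcases chains_ae_disjoint hc hc' m le_rfl hle with h | h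
  · rcases Nat.lt_or_ge m m' with hlt | hge
    · exact absurd (hcm ▸ h ▸ havg' m hlt) (not_le.mpr (sel_avg_gt hJ))
    · have : m = m' := le_antisymm hle hge
      subst this
      exact absurd (hcm ▸ hcm' ▸ h) hne
  · rw [← hcm, ← hcm']
    have : c' m' ⊆ c' m := chain_subset hc' m m' hle le_rfl
    exact measure_mono_null (Set.inter_subset_inter subset_rfl this) h

theorem sel_pairwise (T : TreeStruct μ) (φ : X → ℝ) (t : ℝ) :
    (Sel T φ t).Pairwise (MeasureTheory.AEDisjoint μ) := by
  intro J hJ J' hJ' hne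
  obtain ⟨m, c, hc, hcm, _, havg⟩ := id hJ
  obtain ⟨m', c', hc', hcm', _, havg'⟩ := id hJ'
  rcases le_total m m' with h | h
  · exact sel_aedisjoint_aux hJ hJ' hc hcm havg hc' hcm' havg' h hne
  · have := sel_aedisjoint_aux hJ' hJ hc' hcm' havg' hc hcm havg h hne.symm
    rwa [Set.inter_comm] at this

end MaxAux

namespace MaxAux2
open MaxAux ENNReal

variable {X : Type*} [MeasurableSpace X] {μ : Measure X}

theorem holder_bound [IsFiniteMeasure μ] {φ : X → ℝ} {q t : ℝ}
    (hq : 1 < q) (hφ : ∀ x, 0 ≤ φ x) (hint : Integrable φ μ) {J : Set X}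
    (hJm : MeasurableSet J) (hJpos : 0 < μ J)
    (ht : 0 < t) (havg : t < avg μ φ J) :
    ENNReal.ofReal (t ^ q) * μ J ≤ ∫⁻ x in J, ENNReal.ofReal (φ x ^ q) ∂μ := by
  have hq0 : (0:ℝ) < q := lt_trans one_pos hq
  have hfin : μ J ≠ ⊤ := measure_ne_top μ J
  have hJ0 : μ J ≠ 0 := hJpos.ne'
  have mRpos : 0 < (μ J).toReal := ENNReal.toReal_pos hJ0 hfin
  have hφeq : (∫ y in J, |φ y| ∂μ) = ∫ y in J, φ y ∂μ := by
    congr 1; funext y; exact abs_of_nonneg (hφ y)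
  have step1 : t * (μ J).toReal < ∫ y in J, φ y ∂μ := by
    have := (lt_div_iff₀ mRpos).mp (by rw [avg, hφeq] at havg; exact havg)
    exact this
  have haem : AEMeasurable (fun x => ENNReal.ofReal (φ x)) (μ.restrict J) :=
    ENNReal.measurable_ofReal.comp_aemeasurable hint.aemeasurable.restrict
  have L1 : ENNReal.ofReal t * μ J ≤ ∫⁻ x in J, ENNReal.ofReal (φ x) ∂μ := by
    conv_lhs => rw [← ENNReal.ofReal_toReal hfin, ← ENNReal.ofReal_mul ht.le]
    calc ENNReal.ofReal (t * (μ J).toReal)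
        ≤ ENNReal.ofReal (∫ y in J, φ y ∂μ) := ENNReal.ofReal_le_ofReal step1.le
      _ = ∫⁻ x in J, ENNReal.ofReal (φ x) ∂μ :=
          ofReal_integral_eq_lintegral_ofReal hint.restrict (ae_of_all _ hφ)
  have hpq : q.HolderConjugate (Real.conjExponent q) := Real.HolderConjugate.conjExponent hq
  have hHold : (∫⁻ x in J, ENNReal.ofReal (φ x) ∂μ) ≤
      (∫⁻ x in J, ENNReal.ofReal (φ x ^ q) ∂μ) ^ (1/q) * (μ J) ^ (1/(Real.conjExponent q)) := by
    have := ENNReal.lintegral_mul_le_Lp_mul_Lq (μ.restrict J) hpq haem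
      (aemeasurable_const : AEMeasurable (fun _ => (1:ℝ≥0∞)) (μ.restrict J))
    simp only [Pi.mul_apply, mul_one, ENNReal.one_rpow, setLIntegral_one] at this
    calc (∫⁻ x in J, ENNReal.ofReal (φ x) ∂μ)
        ≤ (∫⁻ x in J, ENNReal.ofReal (φ x) ^ q ∂μ) ^ (1/q) * (μ J) ^ (1/(Real.conjExponent q)) :=
          this
      _ = _ := by
          congr 2
          refine lintegral_congr fun x => ?_
          rw [ENNReal.ofReal_rpow_of_nonneg (hφ x) hq0.le]
  set Y := ∫⁻ x in J, ENNReal.ofReal (φ x ^ q) ∂μ with hY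
  by_cases hYtop : Y = ⊤
  · rw [hYtop]; exact le_top
  have key : ENNReal.ofReal t * μ J ≤ Y ^ (1/q) * (μ J) ^ (1/(Real.conjExponent q)) :=
    L1.trans hHold
  have key2 := ENNReal.rpow_le_rpow key hq0.le
  rw [ENNReal.mul_rpow_of_nonneg _ _ hq0.le, ENNReal.mul_rpow_of_nonneg _ _ hq0.le,
    ← ENNReal.rpow_mul Y, ← ENNReal.rpow_mul (μ J), one_div_mul_cancel hq0.ne',
    ENNReal.rpow_one] at key2
  have hexp : 1 / Real.conjExponent q * q = q - 1 := by
    rw [one_div, inv_mul_eq_div]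
    exact hpq.div_conj_eq_sub_one
  rw [hexp] at key2
  have key3 := mul_le_mul_left key2 ((μ J) ^ (1 - q))
  rw [mul_assoc, mul_assoc, ← ENNReal.rpow_add _ _ hJ0 hfin, ← ENNReal.rpow_add _ _ hJ0 hfin]
    at key3
  have e1 : q + (1 - q) = 1 := by ring
  have e2 : q - 1 + (1 - q) = 0 := by ring
  rw [e1, e2, ENNReal.rpow_one, ENNReal.rpow_zero, mul_one,
    ENNReal.ofReal_rpow_of_nonneg ht.le hq0.le] at key3
  exact key3

theorem sel_union_bound [IsProbabilityMeasure μ] {T : TreeStruct μ} {φ : X → ℝ} {q t : ℝ}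
    (hq : 1 < q) (hφ : ∀ x, 0 ≤ φ x) (hint : Integrable φ μ) (ht : 0 < t) :
    μ (⋃₀ Sel T φ t) ≤ ENNReal.ofReal (t ^ (-q)) *
      (μ.withDensity fun x => ENNReal.ofReal (φ x ^ q)) (⋃₀ Sel T φ t) := by
  set ν := μ.withDensity fun x => ENNReal.ofReal (φ x ^ q) with hν
  have habs : ν ≪ μ := withDensity_absolutelyContinuous μ _
  have hcnt := sel_countable T φ t
  have hmeas : ∀ J ∈ Sel T φ t, MeasurableSet J := by
    intro J hJ
    rcases sel_mem_tree hJ with ⟨m, hm⟩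
    exact T.mem_meas m J hm
  have hpos : ∀ J ∈ Sel T φ t, 0 < μ J := by
    intro J hJ
    rcases sel_mem_tree hJ with ⟨m, hm⟩
    exact T.mem_pos m J hm
  have hrec : ENNReal.ofReal (t ^ (-q)) * ENNReal.ofReal (t ^ q) = 1 := by
    rw [← ENNReal.ofReal_mul (Real.rpow_nonneg ht.le _), ← Real.rpow_add ht,
      neg_add_cancel, Real.rpow_zero, ENNReal.ofReal_one]
  have key : ∀ J ∈ Sel T φ t, μ J ≤ ENNReal.ofReal (t ^ (-q)) * ν J := by
    intro J hJ
    have h1 := holder_bound hq hφ hint (hmeas J hJ) (hpos J hJ) ht (sel_avg_gt hJ)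
    have h2 : ν J = ∫⁻ x in J, ENNReal.ofReal (φ x ^ q) ∂μ :=
      withDensity_apply _ (hmeas J hJ)
    calc μ J = ENNReal.ofReal (t ^ (-q)) * (ENNReal.ofReal (t ^ q) * μ J) := by
          rw [← mul_assoc, hrec, one_mul]
      _ ≤ ENNReal.ofReal (t ^ (-q)) * ν J := by
          rw [h2]; exact mul_le_mul_right h1 _
  have hμun : μ (⋃₀ Sel T φ t) = ∑' J : Sel T φ t, μ J :=
    measure_sUnion₀ hcnt (sel_pairwise T φ t)
      (fun J hJ => (hmeas J hJ).nullMeasurableSet)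
  have hνun : ν (⋃₀ Sel T φ t) = ∑' J : Sel T φ t, ν J :=
    measure_sUnion₀ hcnt
      (fun J hJ K hK hne => habs (sel_pairwise T φ t hJ hK hne))
      (fun J hJ => (hmeas J hJ).nullMeasurableSet)
  rw [hμun, hνun, ← ENNReal.tsum_mul_left]
  exact ENNReal.tsum_le_tsum fun J => key J J.2

end MaxAux2

namespace MaxAux3
open MaxAux MaxAux2 ENNReal

variable {X : Type*} [MeasurableSpace X] {μ : Measure X}

theorem maxOp_eq (T : TreeStruct μ) (φ : X → ℝ) (x : X) :
    maxOp T φ x = sSup (avg μ φ '' {I | T.Mem I ∧ x ∈ I}) := rfl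

theorem setx_nonempty (T : TreeStruct μ) (φ : X → ℝ) (x : X) :
    (avg μ φ '' {I | T.Mem I ∧ x ∈ I}).Nonempty :=
  ⟨_, ⟨Set.univ, ⟨⟨0, univ_mem_level T⟩, Set.mem_univ x⟩, rfl⟩⟩

theorem exists_avg_gt {T : TreeStruct μ} {φ : X → ℝ} {x : X} {t : ℝ}
    (h : t < maxOp T φ x) : ∃ I, T.Mem I ∧ x ∈ I ∧ t < avg μ φ I := by
  rw [maxOp_eq] at h
  obtain ⟨b, hb, hlt⟩ := exists_lt_of_lt_csSup (setx_nonempty T φ x) h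
  obtain ⟨I, ⟨hI, hxI⟩, rfl⟩ := hb
  exact ⟨I, hI, hxI, hlt⟩

theorem le_maxOp_of_bddAbove {T : TreeStruct μ} {φ : X → ℝ} {x : X}
    (hb : BddAbove (avg μ φ '' {I | T.Mem I ∧ x ∈ I}))
    {I : Set X} (hI : T.Mem I) (hxI : x ∈ I) : avg μ φ I ≤ maxOp T φ x :=
  le_csSup hb ⟨I, ⟨hI, hxI⟩, rfl⟩

theorem maxOp_nonneg (T : TreeStruct μ) (φ : X → ℝ) (x : X) : 0 ≤ maxOp T φ x :=
  Real.sSup_nonneg fun y hy => by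
    obtain ⟨I, _, rfl⟩ := hy
    exact div_nonneg (integral_nonneg fun y => abs_nonneg _) ENNReal.toReal_nonneg

/-- The (junk) set where the family of averages is unbounded. -/
def Ubad (T : TreeStruct μ) (φ : X → ℝ) : Set X :=
  {x | ¬ BddAbove (avg μ φ '' {I | T.Mem I ∧ x ∈ I})}

theorem gt_subset_sel_union {T : TreeStruct μ} {φ : X → ℝ} {t : ℝ} :
    {x | t < maxOp T φ x} ⊆ ⋃₀ Sel T φ t := by
  intro x hx
  obtain ⟨I, hI, hxI, hlt⟩ := exists_avg_gt hx
  obtain ⟨J, hJ, hIJ⟩ := sel_cover hI hlt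
  exact ⟨J, hJ, hIJ hxI⟩

theorem ubad_subset_sel_union {T : TreeStruct μ} {φ : X → ℝ} (t : ℝ) :
    Ubad T φ ⊆ ⋃₀ Sel T φ t := by
  intro x hx
  obtain ⟨b, hb, hlt⟩ := not_bddAbove_iff.mp hx t
  obtain ⟨I, ⟨hI, hxI⟩, rfl⟩ := hb
  obtain ⟨J, hJ, hIJ⟩ := sel_cover hI hlt
  exact ⟨J, hJ, hIJ hxI⟩

theorem sel_union_subset {T : TreeStruct μ} {φ : X → ℝ} {t : ℝ} :
    ⋃₀ Sel T φ t ⊆ {x | t < maxOp T φ x} ∪ Ubad T φ := by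
  rintro x ⟨J, hJ, hxJ⟩
  by_cases hb : BddAbove (avg μ φ '' {I | T.Mem I ∧ x ∈ I})
  · exact Or.inl (lt_of_lt_of_le (sel_avg_gt hJ)
      (le_maxOp_of_bddAbove hb (sel_mem_tree hJ) hxJ))
  · exact Or.inr hb

theorem null_unbounded [IsProbabilityMeasure μ] {T : TreeStruct μ} {φ : X → ℝ} {q : ℝ}
    (hq : 1 < q) (hφ : ∀ x, 0 ≤ φ x) (hint : Integrable φ μ)
    (hintq : Integrable (fun x => φ x ^ q) μ) :
    μ (Ubad T φ) = 0 := by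
  set ν := μ.withDensity fun x => ENNReal.ofReal (φ x ^ q) with hνdef
  have hνuniv : ν Set.univ ≠ ⊤ := by
    rw [hνdef, withDensity_apply _ MeasurableSet.univ, Measure.restrict_univ,
      ← ofReal_integral_eq_lintegral_ofReal hintq
        (ae_of_all _ fun x => Real.rpow_nonneg (hφ x) q)]
    exact ENNReal.ofReal_ne_top
  have key : ∀ n : ℕ, μ (Ubad T φ) ≤ ENNReal.ofReal (((n : ℝ) + 1) ^ (-q)) * ν Set.univ := by
    intro n
    have hn : (0:ℝ) < (n : ℝ) + 1 := by positivity
    calc μ (Ubad T φ) ≤ μ (⋃₀ Sel T φ ((n : ℝ) + 1)) :=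
          measure_mono (ubad_subset_sel_union _)
      _ ≤ ENNReal.ofReal (((n : ℝ) + 1) ^ (-q)) * ν (⋃₀ Sel T φ ((n : ℝ) + 1)) :=
          sel_union_bound hq hφ hint hn
      _ ≤ ENNReal.ofReal (((n : ℝ) + 1) ^ (-q)) * ν Set.univ :=
          mul_le_mul_right (measure_mono (Set.subset_univ _)) _
  have hq0 : (0:ℝ) < q := lt_trans one_pos hq
  have h1 : Tendsto (fun n : ℕ => ((n : ℝ) + 1) ^ (-q)) atTop (nhds 0) :=
    (tendsto_rpow_neg_atTop hq0).comp
      (tendsto_atTop_add_const_right atTop 1 tendsto_natCast_atTop_atTop)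
  have h2 : Tendsto (fun n : ℕ => ENNReal.ofReal (((n : ℝ) + 1) ^ (-q)) * ν Set.univ)
      atTop (nhds 0) := by
    have h3 : Tendsto (fun n : ℕ => ENNReal.ofReal (((n : ℝ) + 1) ^ (-q))) atTop (nhds 0) := by
      have := (ENNReal.continuous_ofReal.tendsto 0).comp h1
      simpa [Function.comp_def] using this
    have := ENNReal.Tendsto.mul_const h3 (Or.inr hνuniv)
    simpa using this
  exact le_antisymm (ge_of_tendsto' h2 key) zero_le

theorem weak_type [IsProbabilityMeasure μ] {T : TreeStruct μ} {φ : X → ℝ} {q t : ℝ}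
    (hq : 1 < q) (hφ : ∀ x, 0 ≤ φ x) (hint : Integrable φ μ)
    (hintq : Integrable (fun x => φ x ^ q) μ) (ht : 0 < t) :
    μ {x | t < maxOp T φ x} ≤ ENNReal.ofReal (t ^ (-q)) *
      (μ.withDensity fun x => ENNReal.ofReal (φ x ^ q)) {x | t < maxOp T φ x} := by
  set ν := μ.withDensity fun x => ENNReal.ofReal (φ x ^ q) with hνdef
  have habs : ν ≪ μ := withDensity_absolutelyContinuous μ _
  have hU : ν (Ubad T φ) = 0 := habs (null_unbounded hq hφ hint hintq)
  calc μ {x | t < maxOp T φ x} ≤ μ (⋃₀ Sel T φ t) := measure_mono gt_subset_sel_union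
    _ ≤ ENNReal.ofReal (t ^ (-q)) * ν (⋃₀ Sel T φ t) := sel_union_bound hq hφ hint ht
    _ ≤ ENNReal.ofReal (t ^ (-q)) * (ν {x | t < maxOp T φ x} + ν (Ubad T φ)) :=
        mul_le_mul_right ((measure_mono sel_union_subset).trans (measure_union_le _ _)) _
    _ = ENNReal.ofReal (t ^ (-q)) * ν {x | t < maxOp T φ x} := by rw [hU, add_zero]

theorem ae_le_maxOp [IsProbabilityMeasure μ] {T : TreeStruct μ} {φ : X → ℝ} {q : ℝ}
    (hq : 1 < q) (hφ : ∀ x, 0 ≤ φ x) (hint : Integrable φ μ)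
    (hintq : Integrable (fun x => φ x ^ q) μ) :
    ∀ᵐ x ∂μ, (∫ y, φ y ∂μ) ≤ maxOp T φ x := by
  have havg : avg μ φ Set.univ = ∫ y, φ y ∂μ := by
    rw [avg, Measure.restrict_univ, measure_univ, ENNReal.toReal_one, div_one]
    congr 1; funext y; exact abs_of_nonneg (hφ y)
  have hsub : {x | ¬ (∫ y, φ y ∂μ) ≤ maxOp T φ x} ⊆ Ubad T φ := by
    intro x hx
    by_contra hb
    have hb' : BddAbove (avg μ φ '' {I | T.Mem I ∧ x ∈ I}) := not_not.mp hb
    exact hx (havg ▸ le_maxOp_of_bddAbove hb' ⟨0, univ_mem_level T⟩ (Set.mem_univ x))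
  rw [MeasureTheory.ae_iff]
  exact measure_mono_null hsub (null_unbounded hq hφ hint hintq)

end MaxAux3

namespace MaxAux4
open intervalIntegral

theorem integral_pow1 {p : ℝ} (hp : 0 < p) {s : ℝ} (hs : 0 ≤ s) :
    ∫ t in (0:ℝ)..s, p * t ^ (p - 1) = s ^ p := by
  rw [intervalIntegral.integral_const_mul, integral_rpow (Or.inl (by linarith)),
    sub_add_cancel, Real.zero_rpow hp.ne', sub_zero]
  field_simp

theorem hfun_intble {p q f : ℝ} (hpq : q < p) (hq : 1 < q) (a b : ℝ) :
    IntervalIntegrable ((Set.Ioi f).indicator fun t => p * t ^ (p - q - 1)) volume a b := by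
  have hb : IntervalIntegrable (fun t : ℝ => p * t ^ (p - q - 1)) volume a b :=
    (intervalIntegrable_rpow' (by linarith)).const_mul p
  exact ⟨hb.1.integrable.indicator measurableSet_Ioi,
    hb.2.integrable.indicator measurableSet_Ioi⟩

theorem integral_hfun {p q f s : ℝ} (hpq : q < p) (hq : 1 < q) (hf : 0 ≤ f) (hfs : f ≤ s) :
    ∫ t in (0:ℝ)..s, (Set.Ioi f).indicator (fun t => p * t ^ (p - q - 1)) t
      = p / (p - q) * (s ^ (p - q) - f ^ (p - q)) := by
  have hpq0 : (0:ℝ) < p - q := by linarith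
  rw [← intervalIntegral.integral_add_adjacent_intervals (hfun_intble hpq hq 0 f)
    (hfun_intble hpq hq f s)]
  have h1 : ∫ t in (0:ℝ)..f, (Set.Ioi f).indicator (fun t => p * t ^ (p - q - 1)) t = 0 := by
    rw [intervalIntegral.integral_congr (g := fun _ => (0:ℝ))]
    · simp
    · intro t ht
      rw [Set.uIcc_of_le hf] at ht
      exact Set.indicator_of_notMem (by simpa using ht.2) _
  have h2 : ∫ t in f..s, (Set.Ioi f).indicator (fun t => p * t ^ (p - q - 1)) t
      = ∫ t in f..s, p * t ^ (p - q - 1) := by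
    refine intervalIntegral.integral_congr_ae (ae_of_all _ fun t ht => ?_)
    rw [Set.uIoc_of_le hfs] at ht
    exact Set.indicator_of_mem (Set.mem_Ioi.mpr ht.1) _
  rw [h1, h2, zero_add, intervalIntegral.integral_const_mul,
    integral_rpow (Or.inl (by linarith))]
  have : p - q - 1 + 1 = p - q := by ring
  rw [this]
  field_simp

end MaxAux4

open MaxAux MaxAux2 MaxAux3 MaxAux4

/-- Lemma 4.1: for `1 < q < p` and `φ ≥ 0` in `L^p` with `∫φ = f`, `∫φ^q = A`,
`∫_X (ℳ_𝒯 φ)^p dμ ≤ f^p - (p/(p-q)) f^{p-q} A + (p/(p-q)) ∫_X (ℳ_𝒯 φ)^{p-q} φ^q dμ`. -/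
theorem maximal_basic_inequality {X : Type*} [MeasurableSpace X]
    (μ : Measure X) [IsProbabilityMeasure μ] [NullSingletonClass μ] (T : TreeStruct μ)
    (p q f A : ℝ) (hq : 1 < q) (hqp : q < p)
    (φ : X → ℝ) (hφ : ∀ x, 0 ≤ φ x) (hint : Integrable φ μ)
    (hintq : Integrable (fun x => φ x ^ q) μ)
    (hintp : Integrable (fun x => φ x ^ p) μ)
    (hMp : Integrable (fun x => maxOp T φ x ^ p) μ)
    (hMmix : Integrable (fun x => maxOp T φ x ^ (p - q) * φ x ^ q) μ)
    (hf : ∫ x, φ x ∂μ = f) (hA : ∫ x, φ x ^ q ∂μ = A) :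
    ∫ x, maxOp T φ x ^ p ∂μ ≤
      f ^ p - (p / (p - q)) * f ^ (p - q) * A +
        (p / (p - q)) * ∫ x, maxOp T φ x ^ (p - q) * φ x ^ q ∂μ := by
  have hp1 : (0:ℝ) < p := by linarith
  have hq0 : (0:ℝ) < q := by linarith
  have hpq0 : (0:ℝ) < p - q := by linarith
  have hf0 : (0:ℝ) ≤ f := hf ▸ integral_nonneg hφ
  set g : X → ℝ := maxOp T φ with hgdef
  have hgnn : ∀ x, 0 ≤ g x := maxOp_nonneg T φ
  set ν := μ.withDensity fun x => ENNReal.ofReal (φ x ^ q) with hνdef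
  have habs : ν ≪ μ := withDensity_absolutelyContinuous μ _
  have hdens_mble : AEMeasurable (fun x => ENNReal.ofReal (φ x ^ q)) μ :=
    ENNReal.measurable_ofReal.comp_aemeasurable hintq.aemeasurable
  have hgmble : AEMeasurable g μ := by
    have h1 : AEMeasurable (fun x => g x ^ p) μ := hMp.aemeasurable
    have h2 : (fun x => (g x ^ p) ^ p⁻¹) = g := by
      funext x
      rw [← Real.rpow_mul (hgnn x), mul_inv_cancel₀ hp1.ne', Real.rpow_one]
    rw [← h2]
    exact h1.pow aemeasurable_const
  have hgνmble : AEMeasurable g ν := hgmble.mono_ac habs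
  have haef : ∀ᵐ x ∂μ, f ≤ g x := hf ▸ ae_le_maxOp hq hφ hint hintq
  set c : ℝ := p / (p - q) with hc
  have hc0 : 0 < c := div_pos hp1 hpq0
  set ψ : X → ℝ := fun x => c * (g x ^ (p - q) - f ^ (p - q)) * φ x ^ q with hψ
  have hψint : Integrable ψ μ := by
    have h1 : ψ = fun x => c * (g x ^ (p - q) * φ x ^ q) - c * f ^ (p - q) * (φ x ^ q) := by
      funext x; simp only [hψ]; ring
    rw [h1]
    exact (hMmix.const_mul c).sub (hintq.const_mul _)
  have hψnn : 0 ≤ᵐ[μ] ψ := by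
    filter_upwards [haef] with x hx
    have h1 : f ^ (p - q) ≤ g x ^ (p - q) := Real.rpow_le_rpow hf0 hx hpq0.le
    have h2 : (0:ℝ) ≤ φ x ^ q := Real.rpow_nonneg (hφ x) q
    exact mul_nonneg (mul_nonneg hc0.le (by linarith)) h2
  have hLHS : ∫ x, g x ^ p ∂μ = (∫⁻ x, ENNReal.ofReal (g x ^ p) ∂μ).toReal := by
    rw [integral_eq_lintegral_of_nonneg_ae
      (ae_of_all _ fun x => Real.rpow_nonneg (hgnn x) p) hMp.aestronglyMeasurable]
  have g1_nn : ∀ᵐ t ∂(volume.restrict (Set.Ioi (0:ℝ))), 0 ≤ p * t ^ (p - 1) := by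
    filter_upwards [self_mem_ae_restrict measurableSet_Ioi] with t ht
    have ht' : (0:ℝ) < t := ht
    positivity
  have LC1 : (∫⁻ x, ENNReal.ofReal (g x ^ p) ∂μ)
      = ∫⁻ t in Set.Ioi 0, μ {a | t < g a} * ENNReal.ofReal (p * t ^ (p - 1)) := by
    rw [← lintegral_comp_eq_lintegral_meas_lt_mul μ (ae_of_all _ hgnn) hgmble
      (fun t _ => (intervalIntegral.intervalIntegrable_rpow' (by linarith)).const_mul p) g1_nn]
    exact lintegral_congr fun x => by rw [integral_pow1 hp1 (hgnn x)]
  set hfn : ℝ → ℝ := (Set.Ioi f).indicator fun t => p * t ^ (p - q - 1) with hhfn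
  have hfn_nn : ∀ t, 0 < t → 0 ≤ hfn t := fun t ht =>
    Set.indicator_apply_nonneg fun _ => by positivity
  have T2 : (∫⁻ t in Set.Ioi f, μ {a | t < g a} * ENNReal.ofReal (p * t ^ (p - 1)))
      ≤ ∫⁻ t in Set.Ioi f, ν {a | t < g a} * ENNReal.ofReal (hfn t) := by
    refine lintegral_mono_ae ((ae_restrict_iff' measurableSet_Ioi).2
      (ae_of_all _ fun t ht => ?_))
    have ht' : f < t := ht
    have ht0 : 0 < t := lt_of_le_of_lt hf0 ht'
    have harith : t ^ (-q) * (p * t ^ (p - 1)) = hfn t := by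
      rw [hhfn, Set.indicator_of_mem (Set.mem_Ioi.mpr ht'),
        show t ^ (-q) * (p * t ^ (p - 1)) = p * (t ^ (-q) * t ^ (p - 1)) by ring,
        ← Real.rpow_add ht0, show -q + (p - 1) = p - q - 1 by ring]
    calc μ {a | t < g a} * ENNReal.ofReal (p * t ^ (p - 1))
        ≤ (ENNReal.ofReal (t ^ (-q)) * ν {a | t < g a}) * ENNReal.ofReal (p * t ^ (p - 1)) :=
          mul_le_mul_left (weak_type hq hφ hint hintq ht0) _
      _ = ν {a | t < g a} * ENNReal.ofReal (hfn t) := by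
          rw [mul_comm (ENNReal.ofReal (t ^ (-q))), mul_assoc,
            ← ENNReal.ofReal_mul (Real.rpow_nonneg ht0.le _), harith]
  have T1 : (∫⁻ t in Set.Ioc 0 f, μ {a | t < g a} * ENNReal.ofReal (p * t ^ (p - 1)))
      ≤ ENNReal.ofReal (f ^ p) := by
    have hib : IntegrableOn (fun t : ℝ => p * t ^ (p - 1)) (Set.Ioc 0 f) volume :=
      ((intervalIntegral.intervalIntegrable_rpow' (by linarith)).const_mul p).1
    calc (∫⁻ t in Set.Ioc 0 f, μ {a | t < g a} * ENNReal.ofReal (p * t ^ (p - 1)))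
        ≤ ∫⁻ t in Set.Ioc 0 f, ENNReal.ofReal (p * t ^ (p - 1)) := by
          refine lintegral_mono fun t => ?_
          calc μ {a | t < g a} * ENNReal.ofReal (p * t ^ (p - 1))
              ≤ 1 * ENNReal.ofReal (p * t ^ (p - 1)) := mul_le_mul_left prob_le_one _
            _ = _ := one_mul _
      _ = ENNReal.ofReal (∫ t in Set.Ioc 0 f, p * t ^ (p - 1)) := by
          rw [← ofReal_integral_eq_lintegral_ofReal hib ?_]
          filter_upwards [self_mem_ae_restrict measurableSet_Ioc] with t ht
          have ht' : (0:ℝ) < t := ht.1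
          positivity
      _ = ENNReal.ofReal (f ^ p) := by
          rw [← intervalIntegral.integral_of_le hf0, integral_pow1 hp1 hf0]
  have hsplit : (∫⁻ t in Set.Ioi (0:ℝ), μ {a | t < g a} * ENNReal.ofReal (p * t ^ (p - 1)))
      = (∫⁻ t in Set.Ioc 0 f, μ {a | t < g a} * ENNReal.ofReal (p * t ^ (p - 1)))
        + ∫⁻ t in Set.Ioi f, μ {a | t < g a} * ENNReal.ofReal (p * t ^ (p - 1)) := by
    rw [← Set.Ioc_union_Ioi_eq_Ioi hf0,
      lintegral_union measurableSet_Ioi (Set.Ioc_disjoint_Ioi le_rfl)]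
  have LC2 : (∫⁻ x, ENNReal.ofReal (∫ t in (0:ℝ)..(g x), hfn t) ∂ν)
      = ∫⁻ t in Set.Ioi (0:ℝ), ν {a | t < g a} * ENNReal.ofReal (hfn t) :=
    lintegral_comp_eq_lintegral_meas_lt_mul ν (ae_of_all _ hgnn) hgνmble
      (fun t _ => hfun_intble hqp hq 0 t)
      ((ae_restrict_iff' measurableSet_Ioi).2 (ae_of_all _ hfn_nn))
  have T2'' : (∫⁻ t in Set.Ioc 0 f, ν {a | t < g a} * ENNReal.ofReal (hfn t)) = 0 := by
    have hz : ∀ᵐ t ∂(volume.restrict (Set.Ioc (0:ℝ) f)),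
        ν {a | t < g a} * ENNReal.ofReal (hfn t) = 0 := by
      filter_upwards [self_mem_ae_restrict measurableSet_Ioc] with t ht
      rw [hhfn, Set.indicator_of_notMem (by simpa using ht.2)]
      simp
    rw [lintegral_congr_ae hz, lintegral_zero]
  have T2' : (∫⁻ t in Set.Ioi f, ν {a | t < g a} * ENNReal.ofReal (hfn t))
      = ∫⁻ t in Set.Ioi (0:ℝ), ν {a | t < g a} * ENNReal.ofReal (hfn t) := by
    rw [← Set.Ioc_union_Ioi_eq_Ioi hf0,
      lintegral_union measurableSet_Ioi (Set.Ioc_disjoint_Ioi le_rfl), T2'', zero_add]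
  have haefν : ∀ᵐ x ∂ν, f ≤ g x := haef.filter_mono habs.ae_le
  have hinner : ∀ᵐ x ∂ν, ENNReal.ofReal (∫ t in (0:ℝ)..(g x), hfn t)
      = ENNReal.ofReal (c * (g x ^ (p - q) - f ^ (p - q))) := by
    filter_upwards [haefν] with x hx
    rw [hhfn, integral_hfun hqp hq hf0 hx]
  have hmix_mble : AEMeasurable (fun x => ENNReal.ofReal (c * (g x ^ (p - q) - f ^ (p - q)))) μ :=
    ENNReal.measurable_ofReal.comp_aemeasurable
      (aemeasurable_const.mul ((hgmble.pow aemeasurable_const).sub aemeasurable_const))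
  have LC2' : (∫⁻ x, ENNReal.ofReal (∫ t in (0:ℝ)..(g x), hfn t) ∂ν)
      = ENNReal.ofReal (∫ x, ψ x ∂μ) := by
    rw [lintegral_congr_ae hinner, hνdef,
      lintegral_withDensity_eq_lintegral_mul₀ hdens_mble hmix_mble]
    calc (∫⁻ x, ((fun x => ENNReal.ofReal (φ x ^ q)) *
          fun x => ENNReal.ofReal (c * (g x ^ (p - q) - f ^ (p - q)))) x ∂μ)
        = ∫⁻ x, ENNReal.ofReal (ψ x) ∂μ := by
          refine lintegral_congr fun x => ?_
          simp only [Pi.mul_apply]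
          rw [← ENNReal.ofReal_mul (Real.rpow_nonneg (hφ x) q)]
          congr 1
          simp only [hψ]; ring
      _ = ENNReal.ofReal (∫ x, ψ x ∂μ) :=
          (ofReal_integral_eq_lintegral_ofReal hψint hψnn).symm
  have hψnn' : 0 ≤ ∫ x, ψ x ∂μ := integral_nonneg_of_ae hψnn
  have main : (∫⁻ x, ENNReal.ofReal (g x ^ p) ∂μ)
      ≤ ENNReal.ofReal (f ^ p + ∫ x, ψ x ∂μ) := by
    rw [LC1, hsplit]
    calc _ ≤ ENNReal.ofReal (f ^ p)
          + ∫⁻ t in Set.Ioi f, ν {a | t < g a} * ENNReal.ofReal (hfn t) := add_le_add T1 T2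
      _ = ENNReal.ofReal (f ^ p) + ENNReal.ofReal (∫ x, ψ x ∂μ) := by
          rw [T2', ← LC2, LC2']
      _ = ENNReal.ofReal (f ^ p + ∫ x, ψ x ∂μ) :=
          (ENNReal.ofReal_add (by positivity) hψnn').symm
  have hfinal : ∫ x, g x ^ p ∂μ ≤ f ^ p + ∫ x, ψ x ∂μ := by
    rw [hLHS]
    have h1 := ENNReal.toReal_mono ENNReal.ofReal_ne_top main
    rwa [ENNReal.toReal_ofReal (by positivity)] at h1
  have hψval : ∫ x, ψ x ∂μ
      = c * (∫ x, g x ^ (p - q) * φ x ^ q ∂μ) - c * f ^ (p - q) * A := by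
    have h1 : ψ = fun x => c * (g x ^ (p - q) * φ x ^ q) - c * f ^ (p - q) * (φ x ^ q) := by
      funext x; simp only [hψ]; ring
    rw [h1, integral_sub (hMmix.const_mul c) (hintq.const_mul _),
      integral_const_mul, integral_const_mul, hA]
  calc ∫ x, g x ^ p ∂μ ≤ f ^ p + ∫ x, ψ x ∂μ := hfinal
    _ = f ^ p - c * f ^ (p - q) * A + c * ∫ x, g x ^ (p - q) * φ x ^ q ∂μ := by
        rw [hψval]; ring
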